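/- The dressing orbit through x_f^e equals 𝒯^e: for an n×n complex matrix a, there exists an invertible complex n×n matrix g with a = g₊⁻¹ x_f^e ((x_f^e)⁻¹ g x_f^e)₊ if and only if a belongs to 𝒯^e, the set of block diagonal matrices whose 2×2 diagonal blocks are of the form [[conj(α), ρ],[ρ, −α]] with α in the open unit disk and ρ = (1 − |α|²)^{1/2} (with final 1×1 block equal to −1 when n is odd). -/

import Mathlib

open Matrix

noncomputable section

/-- `ρ = (1 − |α|²)^{1/2}`, as a complex number. -/
def rhoC (a : ℂ) : ℂ := ((Real.sqrt (1 - ‖a‖ ^ 2) : ℝ) : ℂ)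

/-- The even θ-factor `g^e = diag(θ(α₀), θ(α₂), …)`: block diagonal with `2×2`
blocks `θ(α_{2m}) = [[conj α, ρ],[ρ, −α]]` on rows/columns `{2m, 2m+1}`, and final
`1×1` block `−1` when `n` is odd. -/
def cmvE (n : ℕ) (α : ℕ → ℂ) : Matrix (Fin n) (Fin n) ℂ :=
  Matrix.of fun i j =>
    if i.val % 2 = 0 then
      if j.val = i.val then (if i.val + 1 < n then (starRingEnd ℂ) (α i.val) else -1)
      else if j.val = i.val + 1 then rhoC (α i.val)
      else 0
    else
      if j.val = i.val - 1 then rhoC (α (i.val - 1))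
      else if j.val = i.val then -α (i.val - 1)
      else 0

/-- The odd θ-factor `g^o = diag(1, θ(α₁), θ(α₃), …)`: the `1×1` block `1` followed
by `2×2` blocks `θ(α_{2m+1})` on rows/columns `{2m+1, 2m+2}`, and final `1×1` block
`−1` when `n` is even. -/
def cmvO (n : ℕ) (α : ℕ → ℂ) : Matrix (Fin n) (Fin n) ℂ :=
  Matrix.of fun i j =>
    if i.val = 0 then (if j.val = 0 then 1 else 0)
    else if i.val % 2 = 1 then
      if j.val = i.val then (if i.val + 1 < n then (starRingEnd ℂ) (α i.val) else -1)
      else if j.val = i.val + 1 then rhoC (α i.val)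
      else 0
    else
      if j.val = i.val - 1 then rhoC (α (i.val - 1))
      else if j.val = i.val then -α (i.val - 1)
      else 0

/-- Extend an `(n−1)`-tuple of Verblunsky coefficients to a function on `ℕ`
(by `0` outside the range; these values are never used). -/
def extTuple (n : ℕ) (α : Fin (n - 1) → ℂ) : ℕ → ℂ :=
  fun j => if h : j < n - 1 then α ⟨j, h⟩ else 0

/-- The CMV matrix `g(α) = g^e g^o` associated to `α = (α₀,…,α_{n−2})`. -/
def cmv (n : ℕ) (α : Fin (n - 1) → ℂ) : Matrix (Fin n) (Fin n) ℂ :=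
  cmvE n (extTuple n α) * cmvO n (extTuple n α)

open Classical

/-- The Iwasawa pair `(g₊, g₋)` of an invertible complex matrix `g`: the unique
pair with `g₊` unitary, `g₋` lower triangular with positive real diagonal entries
and `g = g₊ g₋⁻¹` (junk value `(1,1)` if no such pair exists). -/
noncomputable def iwaPair {n : ℕ} (g : Matrix (Fin n) (Fin n) ℂ) :
    Matrix (Fin n) (Fin n) ℂ × Matrix (Fin n) (Fin n) ℂ :=
  if h : ∃ p : Matrix (Fin n) (Fin n) ℂ × Matrix (Fin n) (Fin n) ℂ,
      p.1ᴴ * p.1 = 1 ∧ (∀ i j : Fin n, i < j → p.2 i j = 0) ∧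
      (∀ i : Fin n, 0 < (p.2 i i).re ∧ (p.2 i i).im = 0) ∧ g = p.1 * p.2⁻¹
  then h.choose else (1, 1)

/-- The special matrix `x_f^e = diag(w*, w*, …)` (with final `1×1` block `−1` when
`n` is odd), i.e. the even θ-factor with all Verblunsky parameters `0`. -/
noncomputable def xfe (n : ℕ) : Matrix (Fin n) (Fin n) ℂ := cmvE n fun _ => 0

/-- `𝒯^e`: the set of block diagonal matrices with `2×2` diagonal blocks
`[[conj α, ρ],[ρ, −α]]`, `α` in the open unit disk (final `1×1` block `−1` when
`n` is odd). -/
def Te (n : ℕ) : Set (Matrix (Fin n) (Fin n) ℂ) :=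
  {a | ∃ α : ℕ → ℂ, (∀ j, ‖α j‖ < 1) ∧ a = cmvE n α}


open scoped ComplexOrder in
section
namespace IwaAux


/-- positive real complex number -/
def PosR (z : ℂ) : Prop := 0 < z.re ∧ z.im = 0

lemma PosR.ne_zero {z : ℂ} (h : PosR z) : z ≠ 0 := by
  intro hz
  have := h.1
  rw [hz] at this
  simp at this

lemma PosR.one : PosR 1 := by constructor <;> simp

lemma PosR.mul {z w : ℂ} (hz : PosR z) (hw : PosR w) : PosR (z * w) := by
  refine ⟨?_, ?_⟩
  · rw [Complex.mul_re, hz.2, hw.2]; simpa using mul_pos hz.1 hw.1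
  · rw [Complex.mul_im, hz.2, hw.2]; ring

lemma PosR.inv {z : ℂ} (hz : PosR z) : PosR z⁻¹ := by
  refine ⟨?_, ?_⟩
  · rw [Complex.inv_re]
    exact div_pos hz.1 (Complex.normSq_pos.mpr hz.ne_zero)
  · rw [Complex.inv_im, hz.2]; simp

lemma PosR.conj {z : ℂ} (hz : PosR z) : PosR ((starRingEnd ℂ) z) := by
  refine ⟨by simpa using hz.1, by simpa using hz.2⟩

lemma PosR.conj_eq {z : ℂ} (hz : PosR z) : (starRingEnd ℂ) z = z := by
  apply Complex.ext <;> simp [hz.2]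

/-- Lower triangular with positive real diagonal, matching the predicate in `iwaPair`. -/
def Low {n : ℕ} (L : Matrix (Fin n) (Fin n) ℂ) : Prop :=
  (∀ i j : Fin n, i < j → L i j = 0) ∧ ∀ i : Fin n, 0 < (L i i).re ∧ (L i i).im = 0

lemma Low.posR {n : ℕ} {L : Matrix (Fin n) (Fin n) ℂ} (h : Low L) (i : Fin n) :
    PosR (L i i) := h.2 i

lemma Low.blockTriangular {n : ℕ} {L : Matrix (Fin n) (Fin n) ℂ} (h : Low L) :
    L.BlockTriangular (OrderDual.toDual : Fin n → (Fin n)ᵒᵈ) := by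
  intro i j hij
  exact h.1 i j hij

lemma Low.one {n : ℕ} : Low (1 : Matrix (Fin n) (Fin n) ℂ) := by
  constructor
  · intro i j hij
    exact Matrix.one_apply_ne (by exact fun h => absurd h (ne_of_lt hij))
  · intro i; simp

lemma Low.isUnit {n : ℕ} {L : Matrix (Fin n) (Fin n) ℂ} (h : Low L) : IsUnit L := by
  rw [Matrix.isUnit_iff_isUnit_det, Matrix.det_of_lowerTriangular L h.blockTriangular]
  exact (Finset.prod_ne_zero_iff.2 fun i _ => (h.posR i).ne_zero).isUnit

lemma Low.inv {n : ℕ} {L : Matrix (Fin n) (Fin n) ℂ} (h : Low L) : Low L⁻¹ := by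
  have hU := h.isUnit
  have : Invertible L := hU.invertible
  have htri : L⁻¹.BlockTriangular (OrderDual.toDual : Fin n → (Fin n)ᵒᵈ) :=
    Matrix.blockTriangular_inv_of_blockTriangular h.blockTriangular
  have hdiag : ∀ i : Fin n, L⁻¹ i i = (L i i)⁻¹ := by
    intro i
    have h1 : (L * L⁻¹) i i = 1 := by
      rw [Matrix.mul_nonsing_inv L (Matrix.isUnit_iff_isUnit_det L |>.1 hU)]; simp
    rw [Matrix.mul_apply] at h1
    have hcol : ∀ k : Fin n, k ≠ i → L i k * L⁻¹ k i = 0 := by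
      intro k hk
      rcases lt_or_gt_of_ne hk with hlt | hgt
      · rw [htri hlt]; ring
      · rw [h.1 i k hgt]; ring
    rw [Fintype.sum_eq_single i hcol] at h1
    field_simp [(h.posR i).ne_zero] at h1 ⊢
    rw [← h1]
  refine ⟨fun i j hij => htri hij, fun i => ?_⟩
  rw [hdiag i]
  exact ⟨((h.posR i).inv).1, ((h.posR i).inv).2⟩

lemma Low.mul {n : ℕ} {L M : Matrix (Fin n) (Fin n) ℂ} (hL : Low L) (hM : Low M) :
    Low (L * M) := by
  have htri := hL.blockTriangular.mul hM.blockTriangular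
  refine ⟨fun i j hij => htri hij, fun i => ?_⟩
  have : (L * M) i i = L i i * M i i := by
    rw [Matrix.mul_apply]
    apply Fintype.sum_eq_single
    intro k hk
    rcases lt_or_gt_of_ne hk with hlt | hgt
    · rw [hM.1 k i hlt]; ring
    · rw [hL.1 i k hgt]; ring
  rw [this]
  exact ⟨((hL.posR i).mul (hM.posR i)).1, ((hL.posR i).mul (hM.posR i)).2⟩

/-- A unitary lower triangular matrix with positive real diagonal is the identity. -/
lemma low_unitary_eq_one {n : ℕ} {u : Matrix (Fin n) (Fin n) ℂ}
    (hu : uᴴ * u = 1) (hl : Low u) : u = 1 := by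
  have hUnit : IsUnit u := hl.isUnit
  have : Invertible u := hUnit.invertible
  have hinv : u⁻¹ = uᴴ := Matrix.inv_eq_left_inv hu
  have htri : u⁻¹.BlockTriangular (OrderDual.toDual : Fin n → (Fin n)ᵒᵈ) :=
    Matrix.blockTriangular_inv_of_blockTriangular hl.blockTriangular
  -- u is diagonal
  have hdiag : ∀ i j : Fin n, i ≠ j → u i j = 0 := by
    intro i j hij
    rcases lt_or_gt_of_ne hij with hlt | hgt
    · exact hl.1 i j hlt
    · have := htri (show (OrderDual.toDual i) < (OrderDual.toDual j) by exact hgt)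
      rw [hinv, Matrix.conjTranspose_apply] at this
      simpa using this
  ext i j
  rcases eq_or_ne i j with rfl | hij
  · have h1 : (uᴴ * u) i i = 1 := by rw [hu]; simp
    rw [Matrix.mul_apply] at h1
    rw [Fintype.sum_eq_single i (fun k hk => by
      rw [Matrix.conjTranspose_apply, hdiag k i hk]; simp)] at h1
    rw [Matrix.conjTranspose_apply] at h1
    have hz := hl.posR i
    have hre : u i i = ((u i i).re : ℂ) := Complex.ext rfl (by simp [hz.2])
    rw [hre] at h1
    simp only [Complex.star_def, Complex.conj_ofReal] at h1
    have h2 : (u i i).re * (u i i).re = 1 := by exact_mod_cast h1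
    have h3 : (u i i).re = 1 := by nlinarith [hz.1]
    rw [Matrix.one_apply_eq, hre, h3]
    norm_num
  · rw [hdiag i j hij, Matrix.one_apply_ne hij]



lemma iwaPair_eq {n : ℕ} {g u l : Matrix (Fin n) (Fin n) ℂ}
    (hu : uᴴ * u = 1) (hl : Low l) (hg : g = u * l⁻¹) : iwaPair g = (u, l) := by
  have hex : ∃ p : Matrix (Fin n) (Fin n) ℂ × Matrix (Fin n) (Fin n) ℂ,
      p.1ᴴ * p.1 = 1 ∧ (∀ i j : Fin n, i < j → p.2 i j = 0) ∧
      (∀ i : Fin n, 0 < (p.2 i i).re ∧ (p.2 i i).im = 0) ∧ g = p.1 * p.2⁻¹ :=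
    ⟨(u, l), hu, hl.1, hl.2, hg⟩
  rw [iwaPair, dif_pos hex]
  obtain ⟨hu', hl1', hl2', hg'⟩ := hex.choose_spec
  set p := hex.choose with hp
  have hl' : Low p.2 := ⟨hl1', hl2'⟩
  have hlU : IsUnit l := hl.isUnit
  have hlU' : IsUnit p.2 := hl'.isUnit
  have hinv : Invertible l := hlU.invertible
  have hinv' : Invertible p.2 := hlU'.invertible
  have key : u * l⁻¹ = p.1 * p.2⁻¹ := by rw [← hg, ← hg']
  have hp1 : p.1 = u * (l⁻¹ * p.2) := by
    have h2 : u * l⁻¹ * p.2 = p.1 * p.2⁻¹ * p.2 := by rw [key]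
    rw [Matrix.mul_assoc u, Matrix.mul_assoc p.1,
      Matrix.nonsing_inv_mul p.2 (Matrix.isUnit_iff_isUnit_det p.2 |>.1 hlU'),
      Matrix.mul_one] at h2
    exact h2.symm
  set w := l⁻¹ * p.2 with hw
  have hwlow : Low w := hl.inv.mul hl'
  have hwu : wᴴ * w = 1 := by
    have h0 : (u * w)ᴴ * (u * w) = 1 := by rw [← hp1, hu']
    rw [Matrix.conjTranspose_mul] at h0
    rw [show wᴴ * uᴴ * (u * w) = wᴴ * (uᴴ * u) * w by simp only [Matrix.mul_assoc]] at h0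
    rw [hu, Matrix.mul_one] at h0
    exact h0
  have hw1 : w = 1 := low_unitary_eq_one hwu hwlow
  have hp2 : p.2 = l := by
    have : l * w = p.2 := by
      rw [hw, ← Matrix.mul_assoc,
        Matrix.mul_nonsing_inv l (Matrix.isUnit_iff_isUnit_det l |>.1 hlU), Matrix.one_mul]
    rw [← this, hw1, Matrix.mul_one]
  have hp1' : p.1 = u := by rw [hp1, hw1, Matrix.mul_one]
  exact Prod.ext hp1' hp2


lemma posDef_conj {m : Type*} [Fintype m] [DecidableEq m] {T B : Matrix m m ℂ}
    (hT : T.PosDef) (hB : IsUnit B) : (B * T * Bᴴ).PosDef := by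
  constructor
  · exact (hT.posSemidef.mul_mul_conjTranspose_same B).1
  · exact (hT.mul_mul_conjTranspose_same (Matrix.vecMul_injective_of_isUnit hB)).2

lemma posDef_herm_self {m : Type*} [Fintype m] [DecidableEq m] {g : Matrix m m ℂ}
    (hg : IsUnit g) : (gᴴ * g).PosDef := by
  have h1 : (gᴴ * (1 : Matrix m m ℂ) * (gᴴ)ᴴ).PosDef :=
    posDef_conj Matrix.PosDef.one ((Matrix.isUnit_conjTranspose _).2 hg)
  simpa only [Matrix.mul_one, conjTranspose_conjTranspose] using h1

lemma ofReal_sqrt_mul_self {r : ℝ} (hr : 0 ≤ r) :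
    ((Real.sqrt r : ℝ) : ℂ) * ((Real.sqrt r : ℝ) : ℂ) = (r : ℂ) := by
  rw [← Complex.ofReal_mul, Real.mul_self_sqrt hr]

lemma exists_low_chol {n : ℕ} {T : Matrix (Fin n) (Fin n) ℂ}
    (hT : T.PosDef) : ∃ l : Matrix (Fin n) (Fin n) ℂ, Low l ∧ l * lᴴ = T := by
  letI : DecidableEq (Fin n) := fun a b => LinearOrder.toDecidableEq a b
  haveI : WellFoundedLT (Fin n) := inferInstance
  haveI : LocallyFiniteOrderBot (Fin n) := inferInstance
  haveI := LDL.invertibleLowerInv hT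
  have hTunit : IsUnit T := hT.isUnit
  have hdiagPD : (LDL.diag hT).PosDef := by
    rw [LDL.diag_eq_lowerInv_conj]
    exact posDef_conj hT (isUnit_of_invertible (LDL.lowerInv hT))
  have hdpos : ∀ i : Fin n, 0 < LDL.diagEntries hT i := by
    intro i
    rw [LDL.diag] at hdiagPD
    exact (Matrix.posDef_diagonal_iff).1 hdiagPD i
  clear hdiagPD
  set d := LDL.diagEntries hT with hd
  have hdre : ∀ i, 0 < (d i).re ∧ (d i).im = 0 := by
    intro i
    have := hdpos i
    rw [Complex.lt_def] at this
    exact ⟨by simpa using this.1, by simpa using this.2.symm⟩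
  set e : Fin n → ℂ := fun i => ((Real.sqrt (d i).re : ℝ) : ℂ) with he
  have he2 : ∀ i, e i * e i = d i := by
    intro i
    rw [he]
    simp only
    rw [ofReal_sqrt_mul_self (hdre i).1.le]
    exact (Complex.ext (by simp) (by simp [(hdre i).2])).symm
  -- l₀
  set l₀ := LDL.lower hT * Matrix.diagonal e with hl₀
  have hlowtri : (LDL.lower hT).BlockTriangular (OrderDual.toDual : Fin n → (Fin n)ᵒᵈ) := by
    rw [LDL.lower]
    exact Matrix.blockTriangular_inv_of_blockTriangular
      (fun i j hij => LDL.lowerInv_triangular hT hij)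
  have hl₀tri : l₀.BlockTriangular (OrderDual.toDual : Fin n → (Fin n)ᵒᵈ) :=
    hlowtri.mul (Matrix.blockTriangular_diagonal e)
  have hstar : (Matrix.diagonal e)ᴴ = Matrix.diagonal e := by
    ext i j
    rcases eq_or_ne i j with rfl | hij
    · simp [Matrix.conjTranspose_apply, Matrix.diagonal_apply_eq, he, Complex.conj_ofReal]
    · simp [Matrix.conjTranspose_apply, Matrix.diagonal_apply_ne, hij, Ne.symm hij]
  have hdd : Matrix.diagonal e * Matrix.diagonal e = LDL.diag hT := by
    rw [Matrix.diagonal_mul_diagonal, LDL.diag]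
    ext i j
    rcases eq_or_ne i j with rfl | hij
    · rw [Matrix.diagonal_apply_eq, Matrix.diagonal_apply_eq]
      exact he2 i
    · rw [Matrix.diagonal_apply_ne _ hij, Matrix.diagonal_apply_ne _ hij]
  have hl₀mul : l₀ * l₀ᴴ = T := by
    calc l₀ * l₀ᴴ = LDL.lower hT * Matrix.diagonal e *
          ((Matrix.diagonal e)ᴴ * (LDL.lower hT)ᴴ) := by
            rw [hl₀, Matrix.conjTranspose_mul, Matrix.mul_assoc]
      _ = LDL.lower hT * (Matrix.diagonal e * Matrix.diagonal e) * (LDL.lower hT)ᴴ := by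
            rw [hstar]; simp only [Matrix.mul_assoc]
      _ = LDL.lower hT * LDL.diag hT * (LDL.lower hT)ᴴ := by rw [hdd]
      _ = T := LDL.lower_conj_diag hT
  have hl₀unit : IsUnit l₀ := by
    have h1 : l₀ * (l₀ᴴ * T⁻¹) = 1 := by
      rw [← Matrix.mul_assoc, hl₀mul,
        Matrix.mul_nonsing_inv T ((Matrix.isUnit_iff_isUnit_det T).1 hTunit)]
    exact (fun h => (Matrix.isUnit_iff_isUnit_det _).2 (Matrix.isUnit_det_of_right_inverse h)) h1
  have hl₀diag : ∀ i, l₀ i i ≠ 0 := by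
    have hdet : IsUnit l₀.det := (Matrix.isUnit_iff_isUnit_det l₀).1 hl₀unit
    rw [Matrix.det_of_lowerTriangular l₀ hl₀tri] at hdet
    intro i hi
    exact (Finset.prod_ne_zero_iff.1 hdet.ne_zero i (Finset.mem_univ i)) hi
  set p : Fin n → ℂ := fun i => (starRingEnd ℂ) (l₀ i i) / ((‖l₀ i i‖ : ℝ) : ℂ)
    with hp
  have hpp : ∀ i, p i * (starRingEnd ℂ) (p i) = 1 := by
    intro i
    rw [hp]
    simp only
    rw [map_div₀, Complex.conj_conj, Complex.conj_ofReal]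
    rw [div_mul_div_comm, mul_comm ((starRingEnd ℂ) (l₀ i i)) (l₀ i i), Complex.mul_conj]
    rw [Complex.normSq_eq_norm_sq]
    have habs : ((‖l₀ i i‖ : ℝ) : ℂ) ≠ 0 := by
      simpa using (norm_ne_zero_iff.mpr (hl₀diag i))
    field_simp
    push_cast
    ring
  set l := l₀ * Matrix.diagonal p with hl
  have hltri : l.BlockTriangular (OrderDual.toDual : Fin n → (Fin n)ᵒᵈ) :=
    hl₀tri.mul (Matrix.blockTriangular_diagonal p)
  have hldiag : ∀ i, l i i = ((‖l₀ i i‖ : ℝ) : ℂ) := by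
    intro i
    rw [hl, Matrix.mul_diagonal, hp]
    simp only
    rw [mul_div_assoc']
    rw [Complex.mul_conj, Complex.normSq_eq_norm_sq]
    have habs : ((‖l₀ i i‖ : ℝ) : ℂ) ≠ 0 := by
      simpa using (norm_ne_zero_iff.mpr (hl₀diag i))
    field_simp
    push_cast
    ring
  refine ⟨l, ⟨fun i j hij => hltri hij, fun i => ?_⟩, ?_⟩
  · rw [hldiag i]
    constructor
    · simpa using norm_pos_iff.mpr (hl₀diag i)
    · simp
  · have hstarp : (Matrix.diagonal p)ᴴ = Matrix.diagonal (fun i => (starRingEnd ℂ) (p i)) := by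
      ext i j
      rcases eq_or_ne i j with rfl | hij
      · simp only [Matrix.conjTranspose_apply, Matrix.diagonal_apply_eq]
        rfl
      · simp [Matrix.conjTranspose_apply, Matrix.diagonal_apply_ne, hij, Ne.symm hij]
    have hpone : Matrix.diagonal p * Matrix.diagonal (fun i => (starRingEnd ℂ) (p i)) =
        (1 : Matrix (Fin n) (Fin n) ℂ) := by
      rw [Matrix.diagonal_mul_diagonal]
      ext i j
      rcases eq_or_ne i j with rfl | hij
      · rw [Matrix.diagonal_apply_eq, Matrix.one_apply_eq]
        exact hpp i
      · rw [Matrix.diagonal_apply_ne _ hij, Matrix.one_apply_ne hij]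
    calc l * lᴴ = l₀ * Matrix.diagonal p * ((Matrix.diagonal p)ᴴ * l₀ᴴ) := by
          rw [hl, Matrix.conjTranspose_mul, Matrix.mul_assoc]
      _ = l₀ * (Matrix.diagonal p * Matrix.diagonal (fun i => (starRingEnd ℂ) (p i))) * l₀ᴴ := by
          rw [hstarp]; simp only [Matrix.mul_assoc]
      _ = l₀ * (1 : Matrix (Fin n) (Fin n) ℂ) * l₀ᴴ := by rw [hpone]
      _ = T := by rw [Matrix.mul_one]; exact hl₀mul

lemma qr_exists {n : ℕ} (g : Matrix (Fin n) (Fin n) ℂ) (hg : IsUnit g) :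
    ∃ u l : Matrix (Fin n) (Fin n) ℂ, uᴴ * u = 1 ∧ Low l ∧ g = u * l⁻¹ := by
  have hS : (gᴴ * g).PosDef := posDef_herm_self hg
  have hSunit : IsUnit (gᴴ * g) := hS.isUnit
  have hT : ((gᴴ * g)⁻¹).PosDef := hS.inv
  obtain ⟨l, hl, hll⟩ := exists_low_chol hT
  have hlunit : IsUnit l := hl.isUnit
  have hlH : IsUnit lᴴ := (Matrix.isUnit_conjTranspose _).2 hlunit
  refine ⟨g * l, l, ?_, hl, ?_⟩
  · have hinv : gᴴ * g = (l * lᴴ)⁻¹ := by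
      rw [hll, Matrix.nonsing_inv_nonsing_inv _ ((Matrix.isUnit_iff_isUnit_det _).1 hSunit)]
    calc (g * l)ᴴ * (g * l) = lᴴ * (gᴴ * g) * l := by
          rw [Matrix.conjTranspose_mul]; simp only [Matrix.mul_assoc]
      _ = lᴴ * ((lᴴ)⁻¹ * l⁻¹) * l := by rw [hinv, Matrix.mul_inv_rev]
      _ = (lᴴ * (lᴴ)⁻¹) * (l⁻¹ * l) := by simp only [Matrix.mul_assoc]
      _ = 1 := by
          rw [Matrix.mul_nonsing_inv _ ((Matrix.isUnit_iff_isUnit_det _).1 hlH),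
            Matrix.nonsing_inv_mul _ ((Matrix.isUnit_iff_isUnit_det _).1 hlunit),
            Matrix.mul_one]
  · rw [Matrix.mul_assoc,
      Matrix.mul_nonsing_inv _ ((Matrix.isUnit_iff_isUnit_det _).1 hlunit), Matrix.mul_one]


lemma fin_ne {n : ℕ} {x y : Fin n} (h : x.val ≠ y.val) : x ≠ y :=
  fun hc => h (congrArg Fin.val hc)

lemma ofReal_sqrt_mul_self' {r : ℝ} (hr : 0 ≤ r) :
    ((Real.sqrt r : ℝ) : ℂ) * ((Real.sqrt r : ℝ) : ℂ) = (r : ℂ) := by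
  rw [← Complex.ofReal_mul, Real.mul_self_sqrt hr]

lemma star_rhoC (z : ℂ) : star (rhoC z) = rhoC z := by
  rw [rhoC, Complex.star_def, Complex.conj_ofReal]

lemma conj_rhoC (z : ℂ) : (starRingEnd ℂ) (rhoC z) = rhoC z := star_rhoC z

lemma rhoC_sq {z : ℂ} (h : ‖z‖ ≤ 1) :
    rhoC z * rhoC z = 1 - ((‖z‖ : ℝ) : ℂ) ^ 2 := by
  rw [rhoC, ofReal_sqrt_mul_self' (by nlinarith [norm_nonneg z])]
  push_cast
  ring

lemma rhoC_re {z : ℂ} : (rhoC z).re = Real.sqrt (1 - ‖z‖ ^ 2) := by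
  simp [rhoC]

lemma rhoC_im (z : ℂ) : (rhoC z).im = 0 := by simp [rhoC]

lemma rhoC_posR {z : ℂ} (h : ‖z‖ < 1) : 0 < (rhoC z).re ∧ (rhoC z).im = 0 := by
  refine ⟨?_, rhoC_im z⟩
  rw [rhoC_re]
  apply Real.sqrt_pos.2
  nlinarith [norm_nonneg z]

lemma conj_mul_add_rho {z : ℂ} (h : ‖z‖ < 1) :
    z * (starRingEnd ℂ) z + rhoC z * rhoC z = 1 := by
  rw [Complex.mul_conj, Complex.normSq_eq_norm_sq, rhoC_sq h.le]
  push_cast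
  ring

-- entry evaluation lemmas
section eval
variable {n : ℕ} {α : ℕ → ℂ}

lemma cmvE_diag_e {i j : Fin n} (h0 : i.val % 2 = 0) (h1 : i.val + 1 < n)
    (hj : j.val = i.val) : cmvE n α i j = (starRingEnd ℂ) (α i.val) := by
  simp only [cmvE, Matrix.of_apply]
  rw [if_pos h0, if_pos hj, if_pos h1]

lemma cmvE_diag_last {i j : Fin n} (h0 : i.val % 2 = 0) (h1 : ¬ i.val + 1 < n)
    (hj : j.val = i.val) : cmvE n α i j = -1 := by
  simp only [cmvE, Matrix.of_apply]
  rw [if_pos h0, if_pos hj, if_neg h1]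

lemma cmvE_super {i j : Fin n} (h0 : i.val % 2 = 0) (hj : j.val = i.val + 1) :
    cmvE n α i j = rhoC (α i.val) := by
  simp only [cmvE, Matrix.of_apply]
  rw [if_pos h0, if_neg (by omega), if_pos hj]

lemma cmvE_sub {i j : Fin n} (h0 : i.val % 2 = 1) (hj : j.val = i.val - 1) :
    cmvE n α i j = rhoC (α (i.val - 1)) := by
  simp only [cmvE, Matrix.of_apply]
  rw [if_neg (by omega), if_pos hj]

lemma cmvE_diag_o {i j : Fin n} (h0 : i.val % 2 = 1) (hj : j.val = i.val) :
    cmvE n α i j = -α (i.val - 1) := by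
  simp only [cmvE, Matrix.of_apply]
  rw [if_neg (by omega), if_neg (by omega), if_pos hj]

lemma cmvE_eq_zero {i j : Fin n} (h : i.val / 2 ≠ j.val / 2) : cmvE n α i j = 0 := by
  simp only [cmvE, Matrix.of_apply]
  split_ifs <;> first | rfl | (exfalso; omega)

end eval

section unitary
variable {n : ℕ} {α : ℕ → ℂ}

lemma cmvE_unitary (hα : ∀ j, ‖α j‖ < 1) :
    (cmvE n α)ᴴ * cmvE n α = 1 := by
  ext j k
  rw [Matrix.mul_apply]
  simp only [Matrix.conjTranspose_apply]
  by_cases hb : j.val / 2 = k.val / 2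
  · -- same block
    have hcase : j.val = k.val ∨ (j.val % 2 = 0 ∧ k.val = j.val + 1) ∨
        (k.val % 2 = 0 ∧ j.val = k.val + 1) := by omega
    rcases hcase with hjk | ⟨hje, hk⟩ | ⟨hke, hj⟩
    · -- diagonal
      have hjkf : j = k := Fin.ext hjk
      subst hjkf
      rw [Matrix.one_apply_eq]
      rcases Nat.even_or_odd j.val with hje | hjo
      · have hje' : j.val % 2 = 0 := Nat.even_iff.1 hje
        by_cases h1 : j.val + 1 < n
        · have hne : j ≠ (⟨j.val + 1, h1⟩ : Fin n) := fin_ne (show j.val ≠ j.val + 1 by omega)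
          rw [Fintype.sum_eq_add j (⟨j.val + 1, h1⟩ : Fin n) hne (fun x ⟨hx1, hx2⟩ => by
            rw [cmvE_eq_zero (i := x) (j := j) (by
              have := (Fin.val_ne_iff).2 hx1
              have := (Fin.val_ne_iff).2 hx2
              simp only at *
              omega)]
            simp)]
          rw [cmvE_diag_e (i := j) (j := j) hje' h1 rfl,
            cmvE_sub (i := (⟨j.val + 1, h1⟩ : Fin n)) (j := j) (by simp [Nat.add_mod]; omega)
              (by simp)]
          rw [star_rhoC, Complex.star_def, Complex.conj_conj]
          exact conj_mul_add_rho (hα j.val)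
        · rw [Fintype.sum_eq_single j (fun x hx => by
            rw [cmvE_eq_zero (i := x) (j := j) (by
              have := (Fin.val_ne_iff).2 hx
              have hxlt := x.isLt
              omega)]
            simp)]
          rw [cmvE_diag_last (i := j) (j := j) hje' h1 rfl]
          simp
      · have hjo' : j.val % 2 = 1 := Nat.odd_iff.1 hjo
        have h1 : j.val - 1 < n := by omega
        have hne : (⟨j.val - 1, h1⟩ : Fin n) ≠ j := fin_ne (show j.val - 1 ≠ j.val by omega)
        rw [Fintype.sum_eq_add (⟨j.val - 1, h1⟩ : Fin n) j hne (fun x ⟨hx1, hx2⟩ => by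
          rw [cmvE_eq_zero (i := x) (j := j) (by
            have := (Fin.val_ne_iff).2 hx1
            have := (Fin.val_ne_iff).2 hx2
            simp only at *
            omega)]
          simp)]
        rw [cmvE_super (i := (⟨j.val - 1, h1⟩ : Fin n)) (j := j) (by simp; omega)
            (by simp; omega),
          cmvE_diag_o (i := j) (j := j) hjo' rfl]
        rw [star_rhoC]
        have : star (-α (j.val - 1)) * -α (j.val - 1)
            = α (j.val - 1) * (starRingEnd ℂ) (α (j.val - 1)) := by
          rw [Complex.star_def]
          simp
          ring
        rw [this]
        rw [add_comm]
        exact conj_mul_add_rho (hα (j.val - 1))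
    · -- k = j+1, j even
      have hkn : j.val + 1 < n := by rw [← hk]; exact k.isLt
      have hkf : k = (⟨j.val + 1, hkn⟩ : Fin n) := Fin.ext hk
      rw [Matrix.one_apply_ne (fin_ne (by omega))]
      have hne : j ≠ k := fin_ne (by omega)
      rw [Fintype.sum_eq_add j k hne (fun x ⟨hx1, hx2⟩ => by
        rw [cmvE_eq_zero (i := x) (j := j) (by
          have := (Fin.val_ne_iff).2 hx1
          have := (Fin.val_ne_iff).2 hx2
          omega)]
        simp)]
      rw [cmvE_diag_e (i := j) (j := j) hje hkn rfl, cmvE_super (i := j) (j := k) hje hk,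
        cmvE_sub (i := k) (j := j) (by omega) (by omega),
        cmvE_diag_o (i := k) (j := k) (by omega) rfl]
      rw [star_rhoC, Complex.star_def, Complex.conj_conj]
      have : k.val - 1 = j.val := by omega
      rw [this]
      ring
    · -- j = k+1, k even
      have hjn : k.val + 1 < n := by rw [← hj]; exact j.isLt
      rw [Matrix.one_apply_ne (fin_ne (by omega))]
      have hne : k ≠ j := fin_ne (by omega)
      rw [Fintype.sum_eq_add k j hne (fun x ⟨hx1, hx2⟩ => by
        rw [cmvE_eq_zero (i := x) (j := j) (by
          have := (Fin.val_ne_iff).2 hx1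
          have := (Fin.val_ne_iff).2 hx2
          omega)]
        simp)]
      rw [cmvE_super (i := k) (j := j) hke hj, cmvE_diag_e (i := k) (j := k) hke hjn rfl,
        cmvE_sub (i := j) (j := k) (by omega) (by omega),
        cmvE_diag_o (i := j) (j := j) (by omega) rfl]
      rw [star_rhoC]
      have : j.val - 1 = k.val := by omega
      rw [this]
      rw [Complex.star_def]
      simp
      ring
  · -- different blocks
    rw [Matrix.one_apply_ne (fin_ne (by omega))]
    apply Finset.sum_eq_zero
    intro x _
    by_cases hxj : x.val / 2 = j.val / 2
    · rw [cmvE_eq_zero (i := x) (j := k) (by omega)]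
      ring
    · rw [cmvE_eq_zero (i := x) (j := j) hxj]
      simp

end unitary


lemma rhoC_zero : rhoC 0 = 1 := by
  simp [rhoC]

lemma rhoC_conj (z : ℂ) : rhoC ((starRingEnd ℂ) z) = rhoC z := by
  rw [rhoC, rhoC, Complex.norm_conj]

section xfe
variable {n : ℕ}

lemma xfe_e {i j : Fin n} (h0 : i.val % 2 = 0) (hj : j.val = i.val + 1) :
    xfe n i j = 1 := by
  rw [xfe, cmvE_super h0 hj, rhoC_zero]

lemma xfe_o {i j : Fin n} (h0 : i.val % 2 = 1) (hj : j.val = i.val - 1) :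
    xfe n i j = 1 := by
  rw [xfe, cmvE_sub h0 hj, rhoC_zero]

lemma xfe_last {i j : Fin n} (h0 : i.val % 2 = 0) (h1 : ¬ i.val + 1 < n)
    (hj : j.val = i.val) : xfe n i j = -1 :=
  cmvE_diag_last h0 h1 hj

lemma xfe_zero {i j : Fin n}
    (h : ¬ ((i.val % 2 = 0 ∧ j.val = i.val + 1) ∨ (i.val % 2 = 1 ∧ j.val = i.val - 1) ∨
      (i.val % 2 = 0 ∧ j.val = i.val ∧ i.val + 1 = n))) : xfe n i j = 0 := by
  have hi := i.isLt
  simp only [xfe, cmvE, Matrix.of_apply]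
  split_ifs <;> first | rfl | (exfalso; omega) | simp

lemma xfe_herm : (xfe n)ᴴ = xfe n := by
  ext i j
  rw [Matrix.conjTranspose_apply]
  have hi := i.isLt
  have hj := j.isLt
  by_cases hc : (i.val % 2 = 0 ∧ j.val = i.val + 1) ∨ (i.val % 2 = 1 ∧ j.val = i.val - 1) ∨
      (i.val % 2 = 0 ∧ j.val = i.val ∧ i.val + 1 = n)
  · rcases hc with ⟨h0, h1⟩ | ⟨h0, h1⟩ | ⟨h0, h1, h2⟩
    · rw [xfe_o (i := j) (j := i) (by omega) (by omega), xfe_e h0 h1]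
      simp
    · rw [xfe_e (i := j) (j := i) (by omega) (by omega), xfe_o h0 h1]
      simp
    · rw [xfe_last (i := j) (j := i) (by omega) (by omega) (by omega), xfe_last h0 (by omega) h1]
      simp
  · rw [xfe_zero (i := j) (j := i) (by omega), xfe_zero (by omega)]
    simp

lemma xfe_mul_self : xfe n * xfe n = 1 := by
  have h := cmvE_unitary (n := n) (α := fun _ => 0) (fun j => by simp)
  rw [← xfe] at h
  rwa [xfe_herm] at h

lemma xfe_unit : IsUnit (xfe n) := (fun h => (Matrix.isUnit_iff_isUnit_det _).2 (Matrix.isUnit_det_of_right_inverse h)) xfe_mul_self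

lemma xfe_inv : (xfe n)⁻¹ = xfe n := Matrix.inv_eq_left_inv xfe_mul_self

lemma xfe_mul_apply (L : Matrix (Fin n) (Fin n) ℂ) (i : Fin n) (j : Fin n) :
    (xfe n * L) i j =
      if h0 : i.val % 2 = 0 then
        (if h1 : i.val + 1 < n then L ⟨i.val + 1, h1⟩ j else -(L i j))
      else L ⟨i.val - 1, by omega⟩ j := by
  rw [Matrix.mul_apply]
  have hi := i.isLt
  by_cases h0 : i.val % 2 = 0
  · by_cases h1 : i.val + 1 < n
    · rw [dif_pos h0, dif_pos h1]
      rw [Fintype.sum_eq_single (⟨i.val + 1, h1⟩ : Fin n) (fun x hx => by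
        rw [xfe_zero (i := i) (j := x) (by
          have := (Fin.val_ne_iff (a := x) (b := (⟨i.val + 1, h1⟩ : Fin n))).2 hx
          simp only [Fin.val_mk] at this
          omega)]
        ring)]
      rw [xfe_e h0 (by simp), one_mul]
    · rw [dif_pos h0, dif_neg h1]
      rw [Fintype.sum_eq_single i (fun x hx => by
        rw [xfe_zero (i := i) (j := x) (by
          have := (Fin.val_ne_iff (a := x) (b := i)).2 hx
          omega)]
        ring)]
      rw [xfe_last h0 h1 rfl]
      ring
  · rw [dif_neg h0]
    rw [Fintype.sum_eq_single (⟨i.val - 1, by omega⟩ : Fin n) (fun x hx => by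
      rw [xfe_zero (i := i) (j := x) (by
        have := (Fin.val_ne_iff (a := x) (b := (⟨i.val - 1, by omega⟩ : Fin n))).2 hx
        simp only [Fin.val_mk] at this
        omega)]
      ring)]
    rw [xfe_o (by omega) (by simp), one_mul]

end xfe

/-- The lower-triangular factor with parameters α. -/
def lowE (n : ℕ) (α : ℕ → ℂ) : Matrix (Fin n) (Fin n) ℂ :=
  Matrix.of fun i j =>
    if i.val % 2 = 0 then (if j.val = i.val then 1 else 0)
    else if j.val = i.val - 1 then α (i.val - 1)
    else if j.val = i.val then rhoC (α (i.val - 1)) else 0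

section lowE
variable {n : ℕ} {α : ℕ → ℂ}

lemma lowE_diag_e {i j : Fin n} (h0 : i.val % 2 = 0) (hj : j.val = i.val) :
    lowE n α i j = 1 := by
  simp only [lowE, Matrix.of_apply]
  rw [if_pos h0, if_pos hj]

lemma lowE_diag_o {i j : Fin n} (h0 : i.val % 2 = 1) (hj : j.val = i.val) :
    lowE n α i j = rhoC (α (i.val - 1)) := by
  simp only [lowE, Matrix.of_apply]
  rw [if_neg (by omega), if_neg (by omega), if_pos hj]

lemma lowE_sub {i j : Fin n} (h0 : i.val % 2 = 1) (hj : j.val = i.val - 1) :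
    lowE n α i j = α (i.val - 1) := by
  simp only [lowE, Matrix.of_apply]
  rw [if_neg (by omega), if_pos hj]

lemma lowE_zero {i j : Fin n}
    (h : ¬ (j.val = i.val ∨ (i.val % 2 = 1 ∧ j.val = i.val - 1))) : lowE n α i j = 0 := by
  simp only [lowE, Matrix.of_apply]
  split_ifs <;> first | rfl | (exfalso; omega)

lemma lowE_low (hα : ∀ j, ‖α j‖ < 1) : Low (lowE n α) := by
  constructor
  · intro i j hij
    have hij' : i.val < j.val := hij
    exact lowE_zero (by omega)
  · intro i
    by_cases h0 : i.val % 2 = 0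
    · rw [lowE_diag_e h0 rfl]
      simp
    · rw [lowE_diag_o (by omega) rfl]
      exact rhoC_posR (hα _)

/-- The key factorization identity. -/
lemma lowE_mul_cmvE (hα : ∀ j, ‖α j‖ < 1) :
    lowE n α * cmvE n α = xfe n * lowE n (fun k => (starRingEnd ℂ) (α k)) := by
  ext i j
  rw [xfe_mul_apply]
  have hi := i.isLt
  have hj := j.isLt
  rw [Matrix.mul_apply]
  by_cases h0 : i.val % 2 = 0
  · rw [dif_pos h0]
    have hLHS : ∑ k, lowE n α i k * cmvE n α k j = cmvE n α i j := by
      rw [Fintype.sum_eq_single i (fun x hx => by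
        rw [lowE_zero (i := i) (j := x) (by
          have := (Fin.val_ne_iff (a := x) (b := i)).2 hx
          omega)]
        ring)]
      rw [lowE_diag_e h0 rfl, one_mul]
    rw [hLHS]
    by_cases h1 : i.val + 1 < n
    · rw [dif_pos h1]
      by_cases hji : j.val = i.val
      · rw [cmvE_diag_e h0 h1 hji, lowE_sub (i := (⟨i.val + 1, h1⟩ : Fin n)) (by simp [Nat.add_mod]; omega) (by simp; omega)]
        simp
      · by_cases hji2 : j.val = i.val + 1
        · rw [cmvE_super h0 hji2,
            lowE_diag_o (i := (⟨i.val + 1, h1⟩ : Fin n)) (by simp [Nat.add_mod]; omega) (by simp; omega)]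
          simp only [Fin.val_mk]
          rw [(by omega : i.val + 1 - 1 = i.val), rhoC_conj]
        · rw [cmvE_eq_zero (i := i) (j := j) (by omega),
            lowE_zero (i := (⟨i.val + 1, h1⟩ : Fin n)) (j := j) (by simp; omega)]
    · rw [dif_neg h1]
      by_cases hji : j.val = i.val
      · rw [cmvE_diag_last h0 h1 hji, lowE_diag_e h0 hji]
      · rw [cmvE_eq_zero (i := i) (j := j) (by omega), lowE_zero (i := i) (j := j) (by omega)]
        ring
  · rw [dif_neg h0]
    have h1 : i.val - 1 < n := by omega
    have hne : (⟨i.val - 1, h1⟩ : Fin n) ≠ i := fin_ne (by simp; omega)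
    have hLHS : ∑ k, lowE n α i k * cmvE n α k j =
        α (i.val - 1) * cmvE n α ⟨i.val - 1, h1⟩ j + rhoC (α (i.val - 1)) * cmvE n α i j := by
      rw [Fintype.sum_eq_add (⟨i.val - 1, h1⟩ : Fin n) i hne (fun x ⟨hx1, hx2⟩ => by
        rw [lowE_zero (i := i) (j := x) (by
          have := (Fin.val_ne_iff (a := x) (b := (⟨i.val - 1, h1⟩ : Fin n))).2 hx1
          have := (Fin.val_ne_iff (a := x) (b := i)).2 hx2
          simp only [Fin.val_mk] at *
          omega)]
        ring)]
      rw [lowE_sub (by omega) (by simp), lowE_diag_o (by omega) rfl]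
    rw [hLHS]
    by_cases hj1 : j.val = i.val - 1
    · rw [cmvE_diag_e (i := (⟨i.val - 1, h1⟩ : Fin n)) (by simp; omega) (by simp; omega) (by simp; omega),
        cmvE_sub (i := i) (j := j) (by omega) hj1,
        lowE_diag_e (i := (⟨i.val - 1, h1⟩ : Fin n)) (by simp; omega) (by simp; omega)]
      simp only [Fin.val_mk]
      exact conj_mul_add_rho (hα (i.val - 1))
    · by_cases hj2 : j.val = i.val
      · rw [cmvE_super (i := (⟨i.val - 1, h1⟩ : Fin n)) (by simp; omega) (by simp; omega),
          cmvE_diag_o (i := i) (j := j) (by omega) hj2,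
          lowE_zero (i := (⟨i.val - 1, h1⟩ : Fin n)) (j := j) (by simp; omega)]
        simp only [Fin.val_mk]
        ring
      · rw [cmvE_eq_zero (i := (⟨i.val - 1, h1⟩ : Fin n)) (j := j) (by simp; omega),
          cmvE_eq_zero (i := i) (j := j) (by omega),
          lowE_zero (i := (⟨i.val - 1, h1⟩ : Fin n)) (j := j) (by simp; omega)]
        ring

end lowE

lemma PosR.star_iff {z : ℂ} : PosR (star z) ↔ PosR z := by
  constructor <;> intro h <;> exact ⟨by simpa using h.1, by
    have := h.2; simp at this ⊢; simpa using this⟩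

lemma PosR.ofReal_eq {z : ℂ} (h : PosR z) : z = ((z.re : ℝ) : ℂ) :=
  Complex.ext rfl (by simp [h.2])

lemma PosR.star_eq {z : ℂ} (h : PosR z) : star z = z :=
  Complex.ext rfl (by simp [h.2])

/-- Pattern facts for `b = L⁻¹ (xfe M)` with `L, M` lower triangular positive. -/
lemma low_conj_pattern {n : ℕ} {L M b : Matrix (Fin n) (Fin n) ℂ} (hL : Low L) (hM : Low M)
    (hb : b = L⁻¹ * (xfe n * M)) :
    (∀ i j : Fin n, i.val + 2 ≤ j.val → b i j = 0) ∧
    (∀ i j : Fin n, i.val % 2 = 1 → j.val = i.val + 1 → b i j = 0) ∧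
    (∀ i j : Fin n, i.val % 2 = 0 → j.val = i.val + 1 → PosR (b i j)) ∧
    (∀ i : Fin n, i.val % 2 = 0 → i.val + 1 = n → (b i i).re < 0 ∧ (b i i).im = 0) := by
  have hLi : Low L⁻¹ := hL.inv
  set N := xfe n * M with hN
  -- facts about N
  have hN0 : ∀ k j : Fin n, k.val + 2 ≤ j.val → N k j = 0 := by
    intro k j h
    have hk := k.isLt
    have hjlt := j.isLt
    rw [hN, xfe_mul_apply]
    by_cases h0 : k.val % 2 = 0
    · rw [dif_pos h0]
      by_cases h1 : k.val + 1 < n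
      · rw [dif_pos h1]
        exact hM.1 _ _ (show ((⟨k.val + 1, h1⟩ : Fin n) : Fin n) < j from by
          rw [Fin.lt_def]; simp; omega)
      · exfalso; omega
    · rw [dif_neg h0]
      exact hM.1 _ _ (by rw [Fin.lt_def]; simp; omega)
  have hNodd : ∀ k j : Fin n, k.val % 2 = 1 → k.val ≤ j.val → N k j = 0 := by
    intro k j h0 hkj
    rw [hN, xfe_mul_apply, dif_neg (by omega)]
    exact hM.1 _ _ (by rw [Fin.lt_def]; simp; omega)
  have hNsup : ∀ (k j : Fin n) (_ : k.val % 2 = 0) (_ : j.val = k.val + 1), N k j = M j j := by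
    intro k j h0 hj
    have h1 : k.val + 1 < n := by rw [← hj]; exact j.isLt
    rw [hN, xfe_mul_apply, dif_pos h0, dif_pos h1]
    congr 1
    exact Fin.ext (by simp [hj])
  have hNlast : ∀ (k : Fin n) (_ : k.val % 2 = 0) (_ : k.val + 1 = n), N k k = -(M k k) := by
    intro k h0 h1
    rw [hN, xfe_mul_apply, dif_pos h0, dif_neg (by omega)]
  have hbapply : ∀ i j : Fin n, b i j = ∑ k, L⁻¹ i k * N k j := by
    intro i j
    rw [hb, Matrix.mul_apply]
  refine ⟨?_, ?_, ?_, ?_⟩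
  · intro i j h
    rw [hbapply]
    apply Finset.sum_eq_zero
    intro k _
    rcases le_or_gt k.val i.val with hk | hk
    · rw [hN0 k j (by omega)]; ring
    · rw [hLi.1 i k (by rw [Fin.lt_def]; omega)]; ring
  · intro i j h0 hj
    rw [hbapply]
    apply Finset.sum_eq_zero
    intro k _
    rcases lt_or_ge k.val i.val with hk | hk
    · rw [hN0 k j (by omega)]; ring
    · rcases eq_or_lt_of_le hk with heq | hlt
      · have : k = i := Fin.ext heq.symm
        subst this
        rw [hNodd k j h0 (by omega)]; ring
      · rw [hLi.1 i k (by rw [Fin.lt_def]; omega)]; ring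
  · intro i j h0 hj
    have hcol : b i j = L⁻¹ i i * N i j := by
      rw [hbapply]
      apply Fintype.sum_eq_single
      intro k hk
      have hkv : k.val ≠ i.val := Fin.val_ne_iff.2 hk
      rcases lt_or_ge k.val i.val with hklt | hkge
      · rw [hN0 k j (by omega)]; ring
      · rw [hLi.1 i k (by rw [Fin.lt_def]; omega)]; ring
    rw [hcol, hNsup i j h0 hj]
    exact (hLi.posR i).mul (hM.posR j)
  · intro i h0 h1
    have hcol : b i i = L⁻¹ i i * N i i := by
      rw [hbapply]
      apply Fintype.sum_eq_single
      intro k hk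
      have hkv : k.val ≠ i.val := Fin.val_ne_iff.2 hk
      rcases lt_or_ge k.val i.val with hklt | hkge
      · -- k < i : N k i = 0
        rcases Nat.eq_or_lt_of_le (Nat.succ_le_of_lt hklt) with heq | hlt
        · -- k + 1 = i, k has parity opposite to i : k odd
          rw [hNodd k i (by omega) (by omega)]; ring
        · rw [hN0 k i (by omega)]; ring
      · rw [hLi.1 i k (by rw [Fin.lt_def]; omega)]; ring
    rw [hcol, hNlast i h0 h1]
    have hp : PosR (L⁻¹ i i * M i i) := (hLi.posR i).mul (hM.posR i)
    have hmn : L⁻¹ i i * -M i i = -(L⁻¹ i i * M i i) := by ring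
    rw [hmn]
    constructor
    · rw [Complex.neg_re]
      linarith [hp.1]
    · rw [Complex.neg_im, hp.2, neg_zero]

/-- Main forward shape lemma. -/
lemma shape_mem_Te {n : ℕ} {a L₁ L₂ : Matrix (Fin n) (Fin n) ℂ}
    (ha : aᴴ * a = 1) (h1 : Low L₁) (h2 : Low L₂)
    (heq : a = L₁⁻¹ * (xfe n * L₂)) : a ∈ Te n := by
  have haU : IsUnit a := (fun h => (Matrix.isUnit_iff_isUnit_det _).2 (Matrix.isUnit_det_of_left_inverse h)) ha
  have hainv : a⁻¹ = aᴴ := Matrix.inv_eq_left_inv ha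
  have haa : a * aᴴ = 1 := by
    rw [← hainv]
    exact Matrix.mul_nonsing_inv a ((Matrix.isUnit_iff_isUnit_det a).1 haU)
  have h1U : IsUnit L₁ := h1.isUnit
  have h2U : IsUnit L₂ := h2.isUnit
  have heqH : aᴴ = L₂⁻¹ * (xfe n * L₁) := by
    rw [← hainv, heq]
    rw [Matrix.mul_inv_rev, Matrix.mul_inv_rev, xfe_inv,
      Matrix.nonsing_inv_nonsing_inv L₁ ((Matrix.isUnit_iff_isUnit_det L₁).1 h1U)]
    simp only [Matrix.mul_assoc]
  obtain ⟨F0, F1, F2, F3⟩ := low_conj_pattern h1 h2 heq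
  obtain ⟨G0, G1, G2, _⟩ := low_conj_pattern h2 h1 heqH
  -- translate G facts
  have H0 : ∀ i j : Fin n, i.val + 2 ≤ j.val → a j i = 0 := by
    intro i j h
    have := G0 i j h
    rw [Matrix.conjTranspose_apply] at this
    exact star_eq_zero.mp this
  have H1 : ∀ i j : Fin n, i.val % 2 = 1 → j.val = i.val + 1 → a j i = 0 := by
    intro i j h0 hj
    have := G1 i j h0 hj
    rw [Matrix.conjTranspose_apply] at this
    exact star_eq_zero.mp this
  have H2 : ∀ i j : Fin n, i.val % 2 = 0 → j.val = i.val + 1 → PosR (a j i) := by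
    intro i j h0 hj
    have := G2 i j h0 hj
    rw [Matrix.conjTranspose_apply] at this
    exact PosR.star_iff.mp this
  -- block analysis
  have block : ∀ (i : Fin n) (h0 : i.val % 2 = 0) (hn : i.val + 1 < n),
      ‖a i i‖ < 1 ∧
      a i ⟨i.val + 1, hn⟩ = rhoC (a i i) ∧
      a ⟨i.val + 1, hn⟩ i = rhoC (a i i) ∧
      a ⟨i.val + 1, hn⟩ ⟨i.val + 1, hn⟩ = -star (a i i) := by
    intro i h0 hn
    set i1 : Fin n := ⟨i.val + 1, hn⟩ with hi1
    have hne : i ≠ i1 := fin_ne (by simp [hi1])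
    have hzero_row : ∀ x : Fin n, x ≠ i ∧ x ≠ i1 → a i x = 0 := by
      intro x ⟨hx1, hx2⟩
      have hxv1 : x.val ≠ i.val := Fin.val_ne_iff.2 hx1
      have hxv2 : x.val ≠ i.val + 1 := by
        have := Fin.val_ne_iff.2 hx2
        simpa [hi1] using this
      rcases lt_or_ge x.val i.val with hx | hx
      · rcases Nat.eq_or_lt_of_le (Nat.succ_le_of_lt hx) with heq | hlt
        · exact H1 x i (by omega) (by omega)
        · exact H0 x i (by omega)
      · exact F0 i x (by omega)
    have hzero_col : ∀ x : Fin n, x ≠ i ∧ x ≠ i1 → a x i = 0 := by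
      intro x ⟨hx1, hx2⟩
      have hxv1 : x.val ≠ i.val := Fin.val_ne_iff.2 hx1
      have hxv2 : x.val ≠ i.val + 1 := by
        have := Fin.val_ne_iff.2 hx2
        simpa [hi1] using this
      rcases lt_or_ge x.val i.val with hx | hx
      · rcases Nat.eq_or_lt_of_le (Nat.succ_le_of_lt hx) with heq | hlt
        · exact F1 x i (by omega) (by omega)
        · exact F0 x i (by omega)
      · exact H0 i x (by omega)
    -- the three unitarity equations
    have e1 : a i i * star (a i i) + a i i1 * star (a i i1) = 1 := by
      have hrow : (a * aᴴ) i i = 1 := by rw [haa, Matrix.one_apply_eq]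
      rw [Matrix.mul_apply] at hrow
      simp only [Matrix.conjTranspose_apply] at hrow
      rw [Fintype.sum_eq_add i i1 hne (fun x ⟨hx1, hx2⟩ => by
        rw [hzero_row x ⟨hx1, hx2⟩]; ring)] at hrow
      exact hrow
    have e2 : star (a i i) * a i i + star (a i1 i) * a i1 i = 1 := by
      have hcol : (aᴴ * a) i i = 1 := by rw [ha, Matrix.one_apply_eq]
      rw [Matrix.mul_apply] at hcol
      simp only [Matrix.conjTranspose_apply] at hcol
      rw [Fintype.sum_eq_add i i1 hne (fun x ⟨hx1, hx2⟩ => by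
        rw [hzero_col x ⟨hx1, hx2⟩]; ring)] at hcol
      exact hcol
    have e3 : a i i * star (a i1 i) + a i i1 * star (a i1 i1) = 0 := by
      have hro : (a * aᴴ) i i1 = 0 := by
        rw [haa, Matrix.one_apply_ne hne]
      rw [Matrix.mul_apply] at hro
      simp only [Matrix.conjTranspose_apply] at hro
      rw [Fintype.sum_eq_add i i1 hne (fun x ⟨hx1, hx2⟩ => by
        rw [hzero_row x ⟨hx1, hx2⟩]; ring)] at hro
      exact hro
    have hr1 : PosR (a i i1) := F2 i i1 h0 (by simp [hi1])
    have hr2 : PosR (a i1 i) := H2 i i1 h0 (by simp [hi1])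
    have hsr1 : star (a i i1) = a i i1 := hr1.star_eq
    have hsr2 : star (a i1 i) = a i1 i := hr2.star_eq
    rw [hsr1] at e1
    rw [hsr2] at e2 e3
    -- r1 = r2
    have hrr : a i i1 * a i i1 = a i1 i * a i1 i := by
      have hcomm : a i i * star (a i i) = star (a i i) * a i i := by ring
      linear_combination e1 - e2 + hcomm
    have hre : (a i i1).re = (a i1 i).re := by
      have h1' := hr1.ofReal_eq
      have h2' := hr2.ofReal_eq
      rw [h1', h2'] at hrr
      have : (a i i1).re * (a i i1).re = (a i1 i).re * (a i1 i).re := by exact_mod_cast hrr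
      nlinarith [hr1.1, hr2.1]
    have hr12 : a i i1 = a i1 i := Complex.ext hre (by rw [hr1.2, hr2.2])
    -- z = - star x
    have hz : a i1 i1 = -star (a i i) := by
      rw [← hr12] at e3
      have hfact : a i i1 * (a i i + star (a i1 i1)) = 0 := by linear_combination e3
      rcases mul_eq_zero.mp hfact with hc | hc
      · exact absurd hc hr1.ne_zero
      · have : star (a i1 i1) = -(a i i) := by linear_combination hc
        calc a i1 i1 = star (star (a i1 i1)) := by rw [star_star]
          _ = star (-(a i i)) := by rw [this]
          _ = -star (a i i) := by rw [star_neg]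
    -- normSq relation
    have hnsq : Complex.normSq (a i i) = 1 - (a i i1).re * (a i i1).re := by
      have := e1
      rw [Complex.star_def, Complex.mul_conj] at this
      have him : ((a i i1) * star (a i i1)).im = 0 := by
        rw [hsr1, Complex.mul_im, hr1.2]
        ring
      have hre2 : ((a i i1) * (a i i1)).re = (a i i1).re * (a i i1).re := by
        rw [Complex.mul_re, hr1.2]
        ring
      have := congrArg Complex.re this
      simp only [Complex.add_re, Complex.ofReal_re, Complex.one_re, hre2] at this
      linarith
    have habs : ‖a i i‖ < 1 := by
      have hsq : ‖a i i‖ ^ 2 = Complex.normSq (a i i) :=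
        (Complex.normSq_eq_norm_sq _).symm
      nlinarith [norm_nonneg (a i i), hr1.1]
    have hrho : rhoC (a i i) = a i i1 := by
      rw [rhoC]
      have h1' : 1 - ‖a i i‖ ^ 2 = (a i i1).re * (a i i1).re := by
        rw [Complex.sq_norm, hnsq]
        ring
      rw [h1']
      rw [Real.sqrt_mul_self hr1.1.le]
      exact hr1.ofReal_eq.symm
    exact ⟨habs, hrho.symm, by rw [← hr12, ← hrho], hz⟩
  -- last singleton block for odd n
  have lastblock : ∀ (i : Fin n) (_ : i.val % 2 = 0) (_ : i.val + 1 = n), a i i = -1 := by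
    intro i h0 h1
    have hcol : (aᴴ * a) i i = 1 := by rw [ha, Matrix.one_apply_eq]
    rw [Matrix.mul_apply] at hcol
    simp only [Matrix.conjTranspose_apply] at hcol
    rw [Fintype.sum_eq_single i (fun x hx => by
      have hxv : x.val ≠ i.val := Fin.val_ne_iff.2 hx
      have hxlt := x.isLt
      rcases lt_or_ge x.val i.val with hlt | hge
      · rcases Nat.eq_or_lt_of_le (Nat.succ_le_of_lt hlt) with heq | hlt2
        · rw [F1 x i (by omega) (by omega)]; ring
        · rw [F0 x i (by omega)]; ring
      · exfalso; omega)] at hcol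
    have hd := F3 i h0 h1
    have hor : a i i = ((a i i).re : ℂ) := Complex.ext rfl (by simp [hd.2])
    rw [hor, Complex.star_def, Complex.conj_ofReal] at hcol
    have : (a i i).re * (a i i).re = 1 := by exact_mod_cast hcol
    have hm1 : (a i i).re = -1 := by nlinarith [hd.1]
    rw [hor, hm1]
    norm_num
  -- construct the Verblunsky coefficients
  set αf : ℕ → ℂ := fun m => if h : m % 2 = 0 ∧ m + 1 < n then
      star (a ⟨m, by omega⟩ ⟨m, by omega⟩) else 0 with hαf
  have hαf_pos : ∀ (m : ℕ) (h : m % 2 = 0 ∧ m + 1 < n),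
      αf m = star (a ⟨m, by omega⟩ ⟨m, by omega⟩) := by
    intro m h
    simp only [hαf]
    rw [dif_pos h]
  have hαf_neg : ∀ (m : ℕ), ¬ (m % 2 = 0 ∧ m + 1 < n) → αf m = 0 := by
    intro m h
    simp only [hαf]
    rw [dif_neg h]
  refine ⟨αf, ?_, ?_⟩
  · intro m
    by_cases h : m % 2 = 0 ∧ m + 1 < n
    · rw [hαf_pos m h]
      have := (block ⟨m, by omega⟩ (by simpa using h.1) (by simpa using h.2)).1
      simpa using this
    · rw [hαf_neg m h]
      simp
  · ext i j
    have hi := i.isLt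
    have hj := j.isLt
    by_cases h0 : i.val % 2 = 0
    · by_cases hjv : j.val = i.val
      · by_cases h1 : i.val + 1 < n
        · rw [cmvE_diag_e h0 h1 hjv, hαf_pos i.val ⟨h0, h1⟩]
          have hji : j = i := Fin.ext hjv
          subst hji
          have hmk : (⟨j.val, by omega⟩ : Fin n) = j := Fin.ext rfl
          rw [hmk, Complex.star_def, Complex.conj_conj]
        · rw [cmvE_diag_last h0 h1 hjv]
          have hji : j = i := Fin.ext hjv
          subst hji
          exact lastblock j h0 (by omega)
      · by_cases hjv2 : j.val = i.val + 1
        · have h1 : i.val + 1 < n := by omega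
          rw [cmvE_super h0 hjv2, hαf_pos i.val ⟨h0, h1⟩]
          have hjf : j = (⟨i.val + 1, h1⟩ : Fin n) := Fin.ext hjv2
          have hb := (block i h0 h1).2.1
          have hmk : (⟨i.val, by omega⟩ : Fin n) = i := Fin.ext rfl
          rw [hjf, hb, hmk, Complex.star_def, rhoC_conj]
        · -- zero cases
          rw [cmvE_eq_zero (i := i) (j := j) (by omega)]
          rcases lt_or_ge j.val i.val with hlt | hge
          · rcases Nat.eq_or_lt_of_le (Nat.succ_le_of_lt hlt) with heq | hlt2
            · exact H1 j i (by omega) (by omega)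
            · exact H0 j i (by omega)
          · exact F0 i j (by omega)
    · by_cases hjv : j.val = i.val - 1
      · rw [cmvE_sub (by omega) hjv]
        have hm : i.val - 1 < n := by omega
        have h1 : (i.val - 1) + 1 < n := by omega
        rw [hαf_pos (i.val - 1) ⟨by omega, h1⟩]
        have hb := (block ⟨i.val - 1, hm⟩ (by simp; omega) (by simpa using h1)).2.2.1
        have hif : (⟨(⟨i.val - 1, hm⟩ : Fin n).val + 1, by simpa using h1⟩ : Fin n) = i :=
          Fin.ext (by simp; omega)
        rw [hif] at hb
        have hjf : j = (⟨i.val - 1, hm⟩ : Fin n) := Fin.ext (by simpa using hjv)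
        rw [hjf, hb, Complex.star_def, rhoC_conj]
      · by_cases hjv2 : j.val = i.val
        · rw [cmvE_diag_o (by omega) hjv2]
          have hm : i.val - 1 < n := by omega
          have h1 : (i.val - 1) + 1 < n := by omega
          rw [hαf_pos (i.val - 1) ⟨by omega, h1⟩]
          have hb := (block ⟨i.val - 1, hm⟩ (by simp; omega) (by simpa using h1)).2.2.2
          have hif : (⟨(⟨i.val - 1, hm⟩ : Fin n).val + 1, by simpa using h1⟩ : Fin n) = i :=
            Fin.ext (by simp; omega)
          rw [hif] at hb
          have hji : j = i := Fin.ext hjv2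
          subst hji
          rw [hb]
        · rw [cmvE_eq_zero (i := i) (j := j) (by omega)]
          rcases lt_or_ge j.val i.val with hlt | hge
          · rcases Nat.eq_or_lt_of_le (Nat.succ_le_of_lt hlt) with heq | hlt2
            · exfalso; omega
            · exact H0 j i (by omega)
          · rcases Nat.eq_or_lt_of_le hge with heq | hgt
            · exfalso; omega
            · rcases Nat.eq_or_lt_of_le (Nat.succ_le_of_lt hgt) with heq2 | hgt2
              · exact F1 i j (by omega) (by omega)
              · exact F0 i j (by omega)



lemma qr_pair {n : ℕ} (g : Matrix (Fin n) (Fin n) ℂ) (hg : IsUnit g) :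
    ∃ u l : Matrix (Fin n) (Fin n) ℂ, uᴴ * u = 1 ∧ Low l ∧ g = u * l⁻¹ ∧
      iwaPair g = (u, l) := by
  obtain ⟨u, l, hu, hl, hgul⟩ := qr_exists g hg
  exact ⟨u, l, hu, hl, hgul, iwaPair_eq hu hl hgul⟩

end IwaAux
end

open IwaAux in
/-- The dressing orbit through `x_f^e` equals `𝒯^e`: a matrix `a` is of the form
`g₊⁻¹ x_f^e ((x_f^e)⁻¹ g x_f^e)₊` for some invertible `g` iff `a ∈ 𝒯^e`. -/
theorem stmt_15 (n : ℕ) (a : Matrix (Fin n) (Fin n) ℂ) :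
    (∃ g : Matrix (Fin n) (Fin n) ℂ, IsUnit g ∧
        a = ((iwaPair g).1)⁻¹ * xfe n * (iwaPair ((xfe n)⁻¹ * g * xfe n)).1) ↔
      a ∈ Te n := by
  constructor
  · rintro ⟨g, hg, hag⟩
    obtain ⟨u₁, l₁, hu₁, hl₁, hg1, hIP1⟩ := qr_pair g hg
    have hhU : IsUnit ((xfe n)⁻¹ * g * xfe n) := by
      rw [xfe_inv]
      exact (xfe_unit.mul hg).mul xfe_unit
    obtain ⟨u₂, l₂, hu₂, hl₂, hg2, hIP2⟩ := qr_pair _ hhU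
    rw [hIP1, hIP2] at hag
    simp only at hag
    -- invertibility facts
    have hgdet : IsUnit g.det := (Matrix.isUnit_iff_isUnit_det g).1 hg
    have hu₁U : IsUnit u₁ := (fun h => (Matrix.isUnit_iff_isUnit_det _).2 (Matrix.isUnit_det_of_left_inverse h)) hu₁
    have hu₁inv : u₁⁻¹ = u₁ᴴ := Matrix.inv_eq_left_inv hu₁
    have hl₁U : IsUnit l₁ := hl₁.isUnit
    have hl₂U : IsUnit l₂ := hl₂.isUnit
    have hu1eq : u₁ = g * l₁ := by
      rw [hg1, Matrix.mul_assoc,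
        Matrix.nonsing_inv_mul l₁ ((Matrix.isUnit_iff_isUnit_det l₁).1 hl₁U), Matrix.mul_one]
    have hu2eq : u₂ = xfe n * g * xfe n * l₂ := by
      have h' : ((xfe n)⁻¹ * g * xfe n) * l₂ = u₂ := by
        rw [hg2, Matrix.mul_assoc,
          Matrix.nonsing_inv_mul l₂ ((Matrix.isUnit_iff_isUnit_det l₂).1 hl₂U), Matrix.mul_one]
      rw [← h', xfe_inv]
    have hu1inv2 : u₁⁻¹ = l₁⁻¹ * g⁻¹ := by
      rw [hu1eq, Matrix.mul_inv_rev]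
    -- a = l₁⁻¹ * (xfe n * l₂)
    have hkey : a = l₁⁻¹ * (xfe n * l₂) := by
      rw [hag, hu1inv2, hu2eq]
      calc l₁⁻¹ * g⁻¹ * xfe n * (xfe n * g * xfe n * l₂)
          = l₁⁻¹ * (g⁻¹ * ((xfe n * xfe n) * g) * (xfe n * l₂)) := by
            simp only [Matrix.mul_assoc]
        _ = l₁⁻¹ * (xfe n * l₂) := by
            rw [xfe_mul_self, Matrix.one_mul,
              Matrix.nonsing_inv_mul g hgdet, Matrix.one_mul]
    -- a is unitary
    have hauni : aᴴ * a = 1 := by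
      have hu₁inv' : u₁ * u₁ᴴ = 1 := mul_eq_one_comm.2 hu₁
      rw [hag, hu₁inv]
      calc (u₁ᴴ * xfe n * u₂)ᴴ * (u₁ᴴ * xfe n * u₂)
          = u₂ᴴ * ((xfe n)ᴴ * ((u₁ * u₁ᴴ) * ((xfe n) * u₂))) := by
            rw [Matrix.conjTranspose_mul, Matrix.conjTranspose_mul,
              Matrix.conjTranspose_conjTranspose]
            simp only [Matrix.mul_assoc]
        _ = u₂ᴴ * u₂ := by
            rw [hu₁inv', Matrix.one_mul, xfe_herm, ← Matrix.mul_assoc (xfe n), xfe_mul_self,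
              Matrix.one_mul]
        _ = 1 := hu₂
    exact shape_mem_Te hauni hl₁ hl₂ hkey
  · rintro ⟨α, hα, hEq⟩
    subst hEq
    have hα2 : ∀ j, ‖(starRingEnd ℂ) (α j)‖ < 1 := by
      intro j
      rw [Complex.norm_conj]
      exact hα j
    have hl1 : Low (lowE n α) := lowE_low hα
    have hl2 : Low (lowE n fun k => (starRingEnd ℂ) (α k)) := lowE_low hα2
    have hl1U : IsUnit (lowE n α) := hl1.isUnit
    have hl2U : IsUnit (lowE n fun k => (starRingEnd ℂ) (α k)) := hl2.isUnit
    have hl1det : IsUnit (lowE n α).det := (Matrix.isUnit_iff_isUnit_det _).1 hl1U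
    have hl2det : IsUnit (lowE n fun k => (starRingEnd ℂ) (α k)).det :=
      (Matrix.isUnit_iff_isUnit_det _).1 hl2U
    have key := lowE_mul_cmvE (n := n) hα
    refine ⟨(lowE n α)⁻¹, ?_, ?_⟩
    · exact (fun h => (Matrix.isUnit_iff_isUnit_det _).2 (Matrix.isUnit_det_of_right_inverse h)) (Matrix.nonsing_inv_mul _ hl1det)
    · have hIP1 : iwaPair ((lowE n α)⁻¹) = (1, lowE n α) :=
        iwaPair_eq (by rw [Matrix.conjTranspose_one, Matrix.one_mul]) hl1
          (by rw [Matrix.one_mul])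
      have hcmv : cmvE n α = (lowE n α)⁻¹ * (xfe n * lowE n fun k => (starRingEnd ℂ) (α k)) := by
        rw [← key, ← Matrix.mul_assoc ((lowE n α)⁻¹) (lowE n α) (cmvE n α),
          Matrix.nonsing_inv_mul _ hl1det, Matrix.one_mul]
      have hgu : (xfe n)⁻¹ * (lowE n α)⁻¹ * xfe n =
          (xfe n * cmvE n α) * (lowE n fun k => (starRingEnd ℂ) (α k))⁻¹ := by
        rw [hcmv, xfe_inv]
        calc xfe n * (lowE n α)⁻¹ * xfe n
            = xfe n * ((lowE n α)⁻¹ * (xfe n * ((lowE n fun k => (starRingEnd ℂ) (α k)) *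
              (lowE n fun k => (starRingEnd ℂ) (α k))⁻¹))) := by
              rw [Matrix.mul_nonsing_inv _ hl2det, Matrix.mul_one, Matrix.mul_assoc]
          _ = xfe n * ((lowE n α)⁻¹ * (xfe n * lowE n fun k => (starRingEnd ℂ) (α k))) *
              (lowE n fun k => (starRingEnd ℂ) (α k))⁻¹ := by
              simp only [Matrix.mul_assoc]
      have hu2 : (xfe n * cmvE n α)ᴴ * (xfe n * cmvE n α) = 1 := by
        calc (xfe n * cmvE n α)ᴴ * (xfe n * cmvE n α)
            = (cmvE n α)ᴴ * (((xfe n)ᴴ * xfe n) * cmvE n α) := by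
              rw [Matrix.conjTranspose_mul]
              simp only [Matrix.mul_assoc]
          _ = (cmvE n α)ᴴ * cmvE n α := by
              rw [xfe_herm, xfe_mul_self, Matrix.one_mul]
          _ = 1 := cmvE_unitary hα
      have hIP2 : iwaPair ((xfe n)⁻¹ * (lowE n α)⁻¹ * xfe n) =
          (xfe n * cmvE n α, lowE n fun k => (starRingEnd ℂ) (α k)) :=
        iwaPair_eq hu2 hl2 hgu
      rw [hIP1, hIP2]
      simp only
      have hone : (1 : Matrix (Fin n) (Fin n) ℂ)⁻¹ = 1 :=
        Matrix.inv_eq_left_inv (by rw [Matrix.one_mul])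
      rw [hone, Matrix.one_mul, ← Matrix.mul_assoc, xfe_mul_self, Matrix.one_mul]
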